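/- arXiv:2603.27686 — 2 statements merged into one kernel-verified Lean document; each statement's English description precedes it below -/
import Mathlib

section
/- Weighted Cesàro convergence: let (bₖ)ₖ≥1 be a bounded sequence of complex numbers such that (1/n)·∑_{k=1}^{n} bₖ → L as n → ∞, and let g : [0,1] → ℂ be continuously differentiable. Then (1/n)·∑_{k=1}^{n} bₖ·g(k/n) → L·∫₀¹ g(x) dx as n → ∞. -/
open Real Filter

lemma riemann_aux (g : ℝ → ℂ) (K : ℝ) (hK : 0 ≤ K)
    (hint : ∀ a b : ℝ, a ∈ Set.Icc (0:ℝ) 1 → b ∈ Set.Icc (0:ℝ) 1 →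
      IntervalIntegrable g MeasureTheory.volume a b)
    (hLip : ∀ x ∈ Set.Icc (0:ℝ) 1, ∀ y ∈ Set.Icc (0:ℝ) 1, ‖g y - g x‖ ≤ K * |y - x|)
    (n : ℕ) (hn : 1 ≤ n) :
    ‖(1 / (n:ℂ)) * ∑ k ∈ Finset.Icc 1 n, g ((k:ℝ)/n) - ∫ x in (0:ℝ)..1, g x‖ ≤ K / n := by
  have hn0 : (0:ℝ) < n := by exact_mod_cast hn
  set a : ℕ → ℝ := fun i => (i:ℝ) / n with ha
  have hmem : ∀ i : ℕ, i ≤ n → a i ∈ Set.Icc (0:ℝ) 1 := by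
    intro i hi
    constructor
    · positivity
    · rw [div_le_one hn0]; exact_mod_cast hi
  have hmono : ∀ i : ℕ, a i ≤ a (i+1) := by
    intro i
    simp only [ha]
    rw [div_le_div_iff_of_pos_right hn0]
    push_cast; linarith
  have hgap : ∀ i : ℕ, a (i+1) - a i = 1 / n := by
    intro i
    rw [ha]; push_cast; field_simp; ring
  have hsplit : ∑ i ∈ Finset.range n, ∫ x in a i..a (i+1), g x = ∫ x in (0:ℝ)..1, g x := by
    rw [intervalIntegral.sum_integral_adjacent_intervals
      (fun k hk => hint _ _ (hmem k hk.le) (hmem (k+1) hk))]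
    rw [ha]
    norm_num
    rw [div_self hn0.ne']
  have hsum : (1 / (n:ℂ)) * ∑ k ∈ Finset.Icc 1 n, g ((k:ℝ)/n)
      = ∑ i ∈ Finset.range n, (1/(n:ℂ)) * g (a (i+1)) := by
    rw [Finset.mul_sum, ← Finset.Ico_add_one_right_eq_Icc, Finset.sum_Ico_eq_sum_range]
    simp only [Nat.add_sub_cancel, ha]
    exact Finset.sum_congr rfl fun i _ => by push_cast; ring_nf
  rw [hsum, ← hsplit, ← Finset.sum_sub_distrib]
  refine le_trans (norm_sum_le _ _) ?_
  have hterm : ∀ i ∈ Finset.range n,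
      ‖(1/(n:ℂ)) * g (a (i+1)) - ∫ x in a i..a (i+1), g x‖ ≤ K/n * (1/n) := by
    intro i hi
    have hi' : i < n := Finset.mem_range.mp hi
    have hai : a i ∈ Set.Icc (0:ℝ) 1 := hmem i hi'.le
    have hai1 : a (i+1) ∈ Set.Icc (0:ℝ) 1 := hmem (i+1) hi'
    have hii : IntervalIntegrable g MeasureTheory.volume (a i) (a (i+1)) := hint _ _ hai hai1
    have key : (1/(n:ℂ)) * g (a (i+1)) - ∫ x in a i..a (i+1), g x
        = ∫ x in a i..a (i+1), (g (a (i+1)) - g x) := by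
      rw [intervalIntegral.integral_sub intervalIntegrable_const hii,
        intervalIntegral.integral_const, hgap i]
      congr 1
      rw [Complex.real_smul]
      push_cast
      ring
    rw [key]
    have := intervalIntegral.norm_integral_le_of_norm_le_const (C := K/n)
      (f := fun x => g (a (i+1)) - g x) (a := a i) (b := a (i+1)) ?_
    · rw [hgap i, abs_of_nonneg (by positivity)] at this
      exact this
    · intro x hx
      rw [Set.uIoc_of_le (hmono i)] at hx
      have hxm : x ∈ Set.Icc (0:ℝ) 1 := ⟨le_trans hai.1 hx.1.le, le_trans hx.2 hai1.2⟩
      refine le_trans (hLip x hxm _ hai1) ?_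
      rw [div_eq_mul_inv K]
      gcongr
      rw [abs_of_nonneg (by linarith [hx.2]), inv_eq_one_div]
      linarith [hx.1, hgap i]
  refine le_trans (Finset.sum_le_sum hterm) ?_
  rw [Finset.sum_const, Finset.card_range, nsmul_eq_mul]
  rw [div_mul_div_comm, mul_one]
  apply le_of_eq
  field_simp

theorem weighted_cesaro (b : ℕ → ℂ) (M : ℝ) (hb : ∀ k, ‖b k‖ ≤ M) (L : ℂ)
    (hL : Tendsto (fun n : ℕ => (1 / (n : ℂ)) * ∑ k ∈ Finset.Icc 1 n, b k) atTop (nhds L))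
    (g : ℝ → ℂ) (hg : ContDiffOn ℝ 1 g (Set.Icc 0 1)) :
    Tendsto (fun n : ℕ => (1 / (n : ℂ)) * ∑ k ∈ Finset.Icc 1 n, b k * g ((k : ℝ) / n))
      atTop (nhds (L * ∫ x in (0:ℝ)..1, g x)) := by
  -- continuity, boundedness, integrability of g
  have hgc : ContinuousOn g (Set.Icc 0 1) := hg.continuousOn
  obtain ⟨C, hC⟩ := isCompact_Icc.exists_bound_of_continuousOn hgc
  have hC0 : 0 ≤ C := le_trans (norm_nonneg _) (hC 0 ⟨le_refl 0, zero_le_one⟩)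
  have hint : ∀ x y : ℝ, x ∈ Set.Icc (0:ℝ) 1 → y ∈ Set.Icc (0:ℝ) 1 →
      IntervalIntegrable g MeasureTheory.volume x y := by
    intro x y hx hy
    apply (hgc.mono ?_).intervalIntegrable
    have hx' : x ∈ Set.uIcc (0:ℝ) 1 := by rw [Set.uIcc_of_le (zero_le_one' ℝ)]; exact hx
    have hy' : y ∈ Set.uIcc (0:ℝ) 1 := by rw [Set.uIcc_of_le (zero_le_one' ℝ)]; exact hy
    calc Set.uIcc x y ⊆ Set.uIcc 0 1 := Set.uIcc_subset_uIcc hx' hy'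
      _ = Set.Icc 0 1 := Set.uIcc_of_le (zero_le_one' ℝ)
  -- Lipschitz constant
  have hud : UniqueDiffOn ℝ (Set.Icc (0:ℝ) 1) := uniqueDiffOn_Icc zero_lt_one
  have hdc : ContinuousOn (derivWithin g (Set.Icc 0 1)) (Set.Icc 0 1) :=
    hg.continuousOn_derivWithin hud le_rfl
  obtain ⟨K0, hK0⟩ := isCompact_Icc.exists_bound_of_continuousOn hdc
  set K := max K0 0 with hKdef
  have hK : 0 ≤ K := le_max_right _ _
  have hLip : ∀ x ∈ Set.Icc (0:ℝ) 1, ∀ y ∈ Set.Icc (0:ℝ) 1, ‖g y - g x‖ ≤ K * |y - x| := by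
    intro x hx y hy
    have := (convex_Icc (0:ℝ) 1).norm_image_sub_le_of_norm_derivWithin_le (C := K)
      (hg.differentiableOn one_ne_zero) (fun z hz => le_trans (hK0 z hz) (le_max_left _ _)) hx hy
    simpa [Real.norm_eq_abs] using this
  -- the centered sequence and its partial sums
  set c : ℕ → ℂ := fun k => if k = 0 then 0 else b k - L with hc
  set T : ℕ → ℂ := fun m => ∑ k ∈ Finset.Icc 1 m, c k with hTdef
  have hGT : ∀ m : ℕ, ∑ i ∈ Finset.range (m+1), c i = T m := by
    intro m
    rw [Finset.range_eq_Ico, Finset.sum_eq_sum_Ico_succ_bot (Nat.succ_pos m),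
      Nat.succ_eq_add_one, Finset.Ico_add_one_right_eq_Icc]
    simp [hc, hTdef]
  have hT0 : ∀ m : ℕ, T m = (∑ k ∈ Finset.Icc 1 m, b k) - m * L := by
    intro m
    rw [hTdef]
    simp only [hc]
    rw [Finset.sum_congr rfl (fun k hk => if_neg (by
      have := (Finset.mem_Icc.mp hk).1; omega))]
    rw [Finset.sum_sub_distrib, Finset.sum_const, Nat.card_Icc, Nat.add_sub_cancel,
      nsmul_eq_mul]
  have hTtend : Tendsto (fun n : ℕ => (1/(n:ℂ)) * T n) atTop (nhds 0) := by
    have h1 : Tendsto (fun n : ℕ => (1 / (n : ℂ)) * ∑ k ∈ Finset.Icc 1 n, b k - L)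
        atTop (nhds (L - L)) := hL.sub tendsto_const_nhds
    rw [sub_self] at h1
    apply h1.congr'
    filter_upwards [eventually_ge_atTop 1] with n hn
    have hne : (n:ℂ) ≠ 0 := Nat.cast_ne_zero.mpr (by omega)
    rw [hT0, mul_sub]
    congr 1
    field_simp
  have hu : Tendsto (fun n : ℕ => ‖T n‖ / n) atTop (nhds 0) := by
    have := hTtend.norm
    rw [norm_zero] at this
    apply this.congr
    intro n
    rw [norm_mul, norm_div, norm_one, Complex.norm_natCast, one_div, inv_mul_eq_div]
  have hcesaro : Tendsto (fun n : ℕ => (n:ℝ)⁻¹ * ∑ i ∈ Finset.range n, ‖T i‖ / i)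
      atTop (nhds 0) := hu.cesaro
  -- Part B : Abel summation bound
  have key : ∀ n : ℕ, 1 ≤ n →
      ‖(1/(n:ℂ)) * ∑ k ∈ Finset.Icc 1 n, c k * g ((k:ℝ)/n)‖ ≤
        C * (‖T n‖/n) + K * ((n:ℝ)⁻¹ * ∑ i ∈ Finset.range n, ‖T i‖ / i) := by
    intro n hn
    have hn0 : (0:ℝ) < n := by exact_mod_cast hn
    have hmem : ∀ i : ℕ, i ≤ n → ((i:ℝ)/n) ∈ Set.Icc (0:ℝ) 1 := by
      intro i hi
      constructor
      · positivity
      · rw [div_le_one hn0]; exact_mod_cast hi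
    have habel : ∑ k ∈ Finset.Icc 1 n, c k * g ((k:ℝ)/n)
        = g ((n:ℝ)/n) * T n
          - ∑ i ∈ Finset.range n, (g ((((i+1):ℕ):ℝ)/n) - g ((i:ℝ)/n)) * T i := by
      have h0 : ∑ k ∈ Finset.Icc 1 n, c k * g ((k:ℝ)/n)
          = ∑ i ∈ Finset.range (n+1), g ((i:ℝ)/n) • c i := by
        rw [Finset.range_eq_Ico, Finset.sum_eq_sum_Ico_succ_bot (Nat.succ_pos n),
          Nat.succ_eq_add_one, Finset.Ico_add_one_right_eq_Icc]
        simp only [hc, if_pos rfl, smul_zero, zero_add]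
        exact Finset.sum_congr rfl fun k hk => by rw [smul_eq_mul, mul_comm]
      rw [h0, Finset.sum_range_by_parts, Nat.add_sub_cancel]
      rw [hGT n, smul_eq_mul]
      congr 1
      exact Finset.sum_congr rfl fun i _ => by rw [hGT i, smul_eq_mul]
    rw [habel]
    have hnormfac : ∀ z : ℂ, ‖(1/(n:ℂ)) * z‖ = (1/(n:ℝ)) * ‖z‖ := by
      intro z
      rw [norm_mul, norm_div, norm_one, Complex.norm_natCast]
    rw [hnormfac]
    have hstep1 : ‖g ((n:ℝ)/n) * T n
          - ∑ i ∈ Finset.range n, (g ((((i+1):ℕ):ℝ)/n) - g ((i:ℝ)/n)) * T i‖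
        ≤ C * ‖T n‖ + ∑ i ∈ Finset.range n, (K/n) * ‖T i‖ := by
      refine le_trans (norm_sub_le _ _) (add_le_add ?_ ?_)
      · rw [norm_mul]
        exact mul_le_mul_of_nonneg_right (hC _ (hmem n le_rfl)) (norm_nonneg _)
      · refine le_trans (norm_sum_le _ _) (Finset.sum_le_sum ?_)
        intro i hi
        have hi' : i < n := Finset.mem_range.mp hi
        rw [norm_mul]
        refine mul_le_mul_of_nonneg_right ?_ (norm_nonneg _)
        refine le_trans (hLip _ (hmem i hi'.le) _ (hmem (i+1) hi')) ?_
        have : |(((i+1):ℕ):ℝ)/n - (i:ℝ)/n| = 1/n := by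
          push_cast
          rw [div_sub_div_same, add_sub_cancel_left, abs_of_nonneg (by positivity)]
        rw [this, mul_one_div]
    refine le_trans (mul_le_mul_of_nonneg_left hstep1 (by positivity)) ?_
    rw [mul_add]
    refine add_le_add (le_of_eq (by field_simp)) ?_
    simp only [Finset.mul_sum]
    refine Finset.sum_le_sum ?_
    intro i hi
    have hi' : i < n := Finset.mem_range.mp hi
    rcases Nat.eq_zero_or_pos i with h0 | h0
    · subst h0
      simp [hTdef]
    · have hi0 : (0:ℝ) < i := by exact_mod_cast h0
      have : ‖T i‖ / (n:ℝ) ≤ ‖T i‖ / (i:ℝ) :=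
        div_le_div_of_nonneg_left (norm_nonneg _) hi0 (by exact_mod_cast hi'.le)
      calc (1/(n:ℝ)) * ((K/n) * ‖T i‖) = K * ((n:ℝ)⁻¹ * (‖T i‖ / n)) := by ring
        _ ≤ K * ((n:ℝ)⁻¹ * (‖T i‖ / i)) := by
            refine mul_le_mul_of_nonneg_left (mul_le_mul_of_nonneg_left this (by positivity)) hK
  have hPartB : Tendsto (fun n : ℕ => (1/(n:ℂ)) * ∑ k ∈ Finset.Icc 1 n, c k * g ((k:ℝ)/n))
      atTop (nhds 0) := by
    have hBnd : Tendsto (fun n : ℕ =>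
        C * (‖T n‖/n) + K * ((n:ℝ)⁻¹ * ∑ i ∈ Finset.range n, ‖T i‖ / i))
        atTop (nhds (C * 0 + K * 0)) := ((hu.const_mul C).add (hcesaro.const_mul K))
    rw [mul_zero, mul_zero, add_zero] at hBnd
    refine squeeze_zero_norm' ?_ hBnd
    filter_upwards [eventually_ge_atTop 1] with n hn
    exact key n hn
  have hPartA : Tendsto (fun n : ℕ => (1/(n:ℂ)) * ∑ k ∈ Finset.Icc 1 n, (g ((k:ℝ)/n) : ℂ))
      atTop (nhds (∫ x in (0:ℝ)..1, g x)) := by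
    rw [← tendsto_sub_nhds_zero_iff]
    refine squeeze_zero_norm' ?_ (tendsto_const_div_atTop_nhds_zero_nat K)
    filter_upwards [eventually_ge_atTop 1] with n hn
    exact riemann_aux g K hK hint hLip n hn
  have hfinal := (hPartA.const_mul L).add hPartB
  rw [add_zero] at hfinal
  apply hfinal.congr
  intro n
  have hsplit : ∑ k ∈ Finset.Icc 1 n, b k * g ((k:ℝ)/n)
      = ∑ k ∈ Finset.Icc 1 n, (L * g ((k:ℝ)/n) + c k * g ((k:ℝ)/n)) := by
    refine Finset.sum_congr rfl fun k hk => ?_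
    have hk1 : k ≠ 0 := by have := (Finset.mem_Icc.mp hk).1; omega
    simp only [hc, if_neg hk1]
    ring
  rw [hsplit, Finset.sum_add_distrib, ← Finset.mul_sum]
  ring
end

section
/- Approximate fixed point estimate: let f(w) = w + w² + a·w³ + O(w⁴) be holomorphic near 0, let σ be a bounded complex parameter, and set ε² := π²/n² + 2π²σ/n³ + O(n^{−3−α}) with 0 < α < 1. Define ζ^± := ±iπ/n + aπ²/(2n²). Then f(ζ^±) + ε² = ζ^± + 2π²σ/n³ + O(n^{−3−α}) as n → ∞, with a uniform constant in the error term. -/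
open Real Filter

lemma key_identity_afp (a p q u : ℂ) (hq : q^2 = -p^2) :
    (q*u + a*p^2*u^2/2)^2 + a*(q*u + a*p^2*u^2/2)^3 + p^2*u^2
    = (-10*a^2*p^4*u^4 + 6*a^3*q*p^4*u^5 + a^4*p^6*u^6)/8 := by
  linear_combination (u^2 + a*q*u^3 + 3*a^2*p^2*u^4/2) * hq

set_option maxHeartbeats 1000000 in
theorem approximate_fixed_point (f : ℂ → ℂ) (a : ℂ) (r C₀ : ℝ) (hr : 0 < r) (hC₀ : 0 < C₀)
    (hf : DifferentiableOn ℂ f (Metric.ball 0 r))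
    (hexp : ∀ w : ℂ, ‖w‖ < r → ‖f w - (w + w^2 + a * w^3)‖ ≤ C₀ * ‖w‖^4)
    (σ : ℕ → ℂ) (M : ℝ) (hσ : ∀ n, ‖σ n‖ ≤ M)
    (α : ℝ) (hα0 : 0 < α) (hα1 : α < 1)
    (ε2 : ℕ → ℂ) (C₁ : ℝ) (n₁ : ℕ)
    (hε : ∀ n ≥ n₁, ‖ε2 n - ((π : ℂ)^2 / n^2 + 2 * π^2 * σ n / n^3)‖ ≤ C₁ / (n : ℝ) ^ ((3 : ℝ) + α)) :
    ∃ C : ℝ, ∃ n₀ : ℕ, ∀ n ≥ n₀, ∀ s : Bool,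
      let ζ : ℂ := (if s then 1 else -1) * Complex.I * π / n + a * π^2 / (2 * n^2)
      ‖f ζ + ε2 n - ζ - 2 * π^2 * σ n / n^3‖ ≤ C / (n : ℝ) ^ ((3 : ℝ) + α) := by
  have hπ : (0:ℝ) < π := Real.pi_pos
  set A : ℝ := π + ‖a‖ * π ^ 2 / 2 with hA
  have hA0 : 0 < A := by positivity
  set K : ℝ := (10 * ‖a‖^2 * π^4 + 6 * ‖a‖^3 * π^5 + ‖a‖^4 * π^6) / 8 with hK
  have hK0 : 0 ≤ K := by positivity
  refine ⟨C₀ * A^4 + K + C₁, max n₁ (⌈A / r⌉₊ + 1), ?_⟩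
  intro n hn s
  have hn1 : n₁ ≤ n := le_trans (le_max_left _ _) hn
  have hnN : ⌈A / r⌉₊ + 1 ≤ n := le_trans (le_max_right _ _) hn
  have hn0 : 0 < n := lt_of_lt_of_le (Nat.succ_pos _) hnN
  have hnR : (1:ℝ) ≤ (n:ℝ) := by exact_mod_cast hn0
  have hnR0 : (0:ℝ) < (n:ℝ) := by positivity
  have hnC : (n:ℂ) ≠ 0 := Nat.cast_ne_zero.mpr hn0.ne'
  intro ζ
  set e : ℂ := (if s then 1 else -1) with hedef
  have he2 : e^2 = 1 := by rcases s <;> simp [hedef]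
  have hene : ‖e‖ = 1 := by rcases s <;> simp [hedef]
  set p : ℂ := ((π:ℝ):ℂ) with hpdef
  have hpn : ‖p‖ = π := by
    rw [hpdef, Complex.norm_real, Real.norm_eq_abs, abs_of_pos hπ]
  set q : ℂ := e * Complex.I * p with hqdef
  have hq : q^2 = -p^2 := by
    rw [hqdef]
    linear_combination (Complex.I^2 * p^2) * he2 + p^2 * Complex.I_sq
  have hqn : ‖q‖ = π := by
    rw [hqdef, norm_mul, norm_mul, hene, Complex.norm_I, hpn]; ring
  set u : ℂ := ((n:ℂ))⁻¹ with hudef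
  have hun : ‖u‖ = ((n:ℝ))⁻¹ := by
    rw [hudef, norm_inv, Complex.norm_natCast]
  have hζdef : ζ = e * Complex.I * p / n + a * p^2 / (2 * n^2) := rfl
  have hζ : ζ = q*u + a*p^2*u^2/2 := by
    rw [hζdef, hqdef, hudef]; field_simp
  -- norm of ζ
  have hζn : ‖ζ‖ ≤ A / n := by
    rw [hζ]
    calc ‖q*u + a*p^2*u^2/2‖ ≤ ‖q*u‖ + ‖a*p^2*u^2/2‖ := norm_add_le _ _
    _ = π * (n:ℝ)⁻¹ + ‖a‖ * π^2 * ((n:ℝ)⁻¹)^2 / 2 := by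
        rw [norm_mul, hqn, hun, norm_div, norm_mul, norm_mul, norm_pow, norm_pow, hpn, hun]
        norm_num
    _ ≤ π * (n:ℝ)⁻¹ + ‖a‖ * π^2 * (n:ℝ)⁻¹ / 2 := by
        have hi1 : (n:ℝ)⁻¹ ≤ 1 := inv_le_one_of_one_le₀ hnR
        have hi0 : (0:ℝ) ≤ (n:ℝ)⁻¹ := inv_nonneg.mpr hnR0.le
        have h1 : ((n:ℝ)⁻¹)^2 ≤ (n:ℝ)⁻¹ := by nlinarith
        have h2 : ‖a‖ * π^2 * ((n:ℝ)⁻¹)^2 / 2 ≤ ‖a‖ * π^2 * (n:ℝ)⁻¹ / 2 := by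
          have : (0:ℝ) ≤ ‖a‖ * π^2 := by positivity
          nlinarith
        linarith
    _ = A / n := by rw [hA]; field_simp
  have hζr : ‖ζ‖ < r := by
    refine lt_of_le_of_lt hζn ?_
    rw [div_lt_iff₀ hnR0]
    have h1 : (A / r : ℝ) < n := by
      have := Nat.le_ceil (A / r)
      have h2 : ((⌈A / r⌉₊ : ℝ) + 1) ≤ (n:ℝ) := by exact_mod_cast hnN
      linarith
    calc A = (A / r) * r := by field_simp
    _ < n * r := mul_lt_mul_of_pos_right h1 hr
    _ = r * n := mul_comm _ _
  -- the three error terms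
  have hpu : p^2/(n:ℂ)^2 = p^2*u^2 := by
    rw [hudef, inv_pow, div_eq_mul_inv]
  have hE2 : ζ^2 + a*ζ^3 + p^2/(n:ℂ)^2
      = (-10*a^2*p^4*u^4 + 6*a^3*q*p^4*u^5 + a^4*p^6*u^6)/8 := by
    rw [hpu, hζ]
    exact key_identity_afp a p q u hq
  have hsplit : f ζ + ε2 n - ζ - 2 * p^2 * σ n / (n:ℂ)^3
      = (f ζ - (ζ + ζ^2 + a*ζ^3)) + (ζ^2 + a*ζ^3 + p^2/(n:ℂ)^2)
        + (ε2 n - (p^2/(n:ℂ)^2 + 2 * p^2 * σ n / (n:ℂ)^3)) := by ring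
  have hE1n : ‖f ζ - (ζ + ζ^2 + a*ζ^3)‖ ≤ C₀ * (A/n)^4 := by
    refine le_trans (hexp ζ hζr) ?_
    exact mul_le_mul_of_nonneg_left (pow_le_pow_left₀ (norm_nonneg ζ) hζn 4) hC₀.le
  have hE2n : ‖ζ^2 + a*ζ^3 + p^2/(n:ℂ)^2‖ ≤ K / (n:ℝ)^4 := by
    rw [hE2]
    have h8 : ‖(8:ℂ)‖ = 8 := by norm_num
    rw [norm_div, h8]
    have hb : ‖-10*a^2*p^4*u^4 + 6*a^3*q*p^4*u^5 + a^4*p^6*u^6‖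
        ≤ 10*‖a‖^2*π^4*((n:ℝ)⁻¹)^4 + 6*‖a‖^3*π^5*((n:ℝ)⁻¹)^5 + ‖a‖^4*π^6*((n:ℝ)⁻¹)^6 := by
      calc ‖-10*a^2*p^4*u^4 + 6*a^3*q*p^4*u^5 + a^4*p^6*u^6‖
          ≤ ‖-10*a^2*p^4*u^4 + 6*a^3*q*p^4*u^5‖ + ‖a^4*p^6*u^6‖ := norm_add_le _ _
        _ ≤ ‖-10*a^2*p^4*u^4‖ + ‖6*a^3*q*p^4*u^5‖ + ‖a^4*p^6*u^6‖ := by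
            gcongr; exact norm_add_le _ _
        _ = 10*‖a‖^2*π^4*((n:ℝ)⁻¹)^4 + 6*‖a‖^3*π^5*((n:ℝ)⁻¹)^5 + ‖a‖^4*π^6*((n:ℝ)⁻¹)^6 := by
            have e10 : ‖(-10:ℂ)‖ = 10 := by
              rw [norm_neg]; simp
            have e6 : ‖(6:ℂ)‖ = 6 := by simp
            simp only [norm_mul, norm_pow, hpn, hun, hqn, e10, e6]
            ring
    have hmon : ∀ k : ℕ, 4 ≤ k → ((n:ℝ)⁻¹)^k ≤ ((n:ℝ)⁻¹)^4 := by
      intro k hk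
      exact pow_le_pow_of_le_one (by positivity) (inv_le_one_of_one_le₀ hnR) hk
    have h5 := hmon 5 (by norm_num)
    have h6 := hmon 6 (by norm_num)
    have : ‖-10*a^2*p^4*u^4 + 6*a^3*q*p^4*u^5 + a^4*p^6*u^6‖
        ≤ (10*‖a‖^2*π^4 + 6*‖a‖^3*π^5 + ‖a‖^4*π^6) * ((n:ℝ)⁻¹)^4 := by
      refine le_trans hb ?_
      have h5' : 6*‖a‖^3*π^5*((n:ℝ)⁻¹)^5 ≤ 6*‖a‖^3*π^5*((n:ℝ)⁻¹)^4 :=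
        mul_le_mul_of_nonneg_left h5 (by positivity)
      have h6' : ‖a‖^4*π^6*((n:ℝ)⁻¹)^6 ≤ ‖a‖^4*π^6*((n:ℝ)⁻¹)^4 :=
        mul_le_mul_of_nonneg_left h6 (by positivity)
      calc 10*‖a‖^2*π^4*((n:ℝ)⁻¹)^4 + 6*‖a‖^3*π^5*((n:ℝ)⁻¹)^5 + ‖a‖^4*π^6*((n:ℝ)⁻¹)^6
          ≤ 10*‖a‖^2*π^4*((n:ℝ)⁻¹)^4 + 6*‖a‖^3*π^5*((n:ℝ)⁻¹)^4 + ‖a‖^4*π^6*((n:ℝ)⁻¹)^4 :=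
            add_le_add (add_le_add le_rfl h5') h6'
        _ = (10*‖a‖^2*π^4 + 6*‖a‖^3*π^5 + ‖a‖^4*π^6) * ((n:ℝ)⁻¹)^4 := by ring
    calc ‖-10*a^2*p^4*u^4 + 6*a^3*q*p^4*u^5 + a^4*p^6*u^6‖ / 8
        ≤ ((10*‖a‖^2*π^4 + 6*‖a‖^3*π^5 + ‖a‖^4*π^6) * ((n:ℝ)⁻¹)^4) / 8 := by
          linarith [this]
      _ = K / (n:ℝ)^4 := by rw [hK, inv_pow]; ring
  have hE3n : ‖ε2 n - (p^2/(n:ℂ)^2 + 2 * p^2 * σ n / (n:ℂ)^3)‖ ≤ C₁ / (n:ℝ)^((3:ℝ)+α) :=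
    hε n hn1
  -- power comparison
  have hrp0 : (0:ℝ) < (n:ℝ)^((3:ℝ)+α) := Real.rpow_pos_of_pos hnR0 _
  have h34 : (n:ℝ)^((3:ℝ)+α) ≤ (n:ℝ)^(4:ℕ) := by
    calc (n:ℝ)^((3:ℝ)+α) ≤ (n:ℝ)^((4:ℝ)) :=
          Real.rpow_le_rpow_of_exponent_le hnR (by linarith)
      _ = (n:ℝ)^(4:ℕ) := by
          rw [show ((4:ℝ)) = ((4:ℕ):ℝ) by norm_num, Real.rpow_natCast]
  have hC₁0 : 0 ≤ C₁ := by
    have := hε n hn1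
    have h := norm_nonneg (ε2 n - ((π : ℂ)^2 / n^2 + 2 * π^2 * σ n / n^3))
    have h2 : (0:ℝ) ≤ C₁ / (n:ℝ)^((3:ℝ)+α) := le_trans h this
    have h3 := mul_nonneg h2 hrp0.le
    rwa [div_mul_cancel₀ _ hrp0.ne'] at h3
  calc ‖f ζ + ε2 n - ζ - 2 * p^2 * σ n / (n:ℂ)^3‖
      ≤ ‖f ζ - (ζ + ζ^2 + a*ζ^3)‖ + ‖ζ^2 + a*ζ^3 + p^2/(n:ℂ)^2‖
        + ‖ε2 n - (p^2/(n:ℂ)^2 + 2 * p^2 * σ n / (n:ℂ)^3)‖ := by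
        rw [hsplit]; exact norm_add₃_le
    _ ≤ C₀*(A/(n:ℝ))^4 + K/(n:ℝ)^4 + C₁/(n:ℝ)^((3:ℝ)+α) :=
        add_le_add (add_le_add hE1n hE2n) hE3n
    _ ≤ (C₀*A^4 + K + C₁)/(n:ℝ)^((3:ℝ)+α) := by
        have e1 : C₀*(A/(n:ℝ))^4 = (C₀*A^4)/(n:ℝ)^4 := by rw [div_pow]; ring
        rw [e1]
        have d1 : (C₀*A^4)/(n:ℝ)^4 ≤ (C₀*A^4)/(n:ℝ)^((3:ℝ)+α) := by
          apply div_le_div_of_nonneg_left (by positivity) hrp0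
          exact_mod_cast h34
        have d2 : K/(n:ℝ)^4 ≤ K/(n:ℝ)^((3:ℝ)+α) := by
          rcases eq_or_lt_of_le hK0 with h | h
          · rw [← h]; simp
          · apply div_le_div_of_nonneg_left hK0 hrp0
            exact_mod_cast h34
        rw [add_div, add_div]
        exact add_le_add (add_le_add d1 d2) le_rfl
end
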